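/- Let N be an odd positive integer and let a, b be integers with a coprime to N. Then the Gaussian g : ZMod N → ℂ defined by g k = exp(2πi·(a·k.val² + b·k.val)/N) is biunimodular: ‖g k‖ = 1 for all k, and ‖ĝ c‖ = 1 for all c ∈ ZMod N, where ĝ c = (1/√N) · Σ_{k ∈ ZMod N} exp(2πi·k.val·c.val/N) · g k. -/

import Mathlib

open Complex

/-- The unitarily normalized discrete Fourier transform on `ZMod N`. -/
noncomputable def dft1 (N : ℕ) [NeZero N] (f : ZMod N → ℂ) : ZMod N → ℂ :=
  fun c => (1 / Real.sqrt N : ℂ) * ∑ k : ZMod N,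
    Complex.exp (2 * Real.pi * Complex.I * (k.val * c.val) / N) * f k

set_option linter.unusedSectionVars false

namespace Stmt16Aux
variable (N : ℕ) [NeZero N]

noncomputable def E (m : ℤ) : ℂ := Complex.exp (2 * Real.pi * Complex.I * m / N)

lemma E_add (m n : ℤ) : E N (m + n) = E N m * E N n := by
  rw [E, E, E, ← Complex.exp_add]
  congr 1
  push_cast
  ring

lemma E_zero : E N 0 = 1 := by simp [E]

lemma E_intMul (k : ℤ) : E N (k * N) = 1 := by
  have hN : (N : ℂ) ≠ 0 := Nat.cast_ne_zero.mpr (NeZero.ne N)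
  rw [E, show 2 * Real.pi * Complex.I * ((k * N : ℤ) : ℂ) / N = k * (2 * Real.pi * Complex.I) by
    push_cast; field_simp]
  exact Complex.exp_int_mul_two_pi_mul_I k

lemma E_congr {m n : ℤ} (h : (m : ZMod N) = n) : E N m = E N n := by
  have h' : m ≡ n [ZMOD (N : ℤ)] := (ZMod.intCast_eq_intCast_iff _ _ _).mp h
  obtain ⟨k, hk⟩ := Int.ModEq.dvd h'
  have hn : n = m + k * N := by linarith
  rw [hn, E_add, E_intMul, mul_one]

lemma E_as_real (m : ℤ) :
    E N m = Complex.exp ((2 * Real.pi * m / N : ℝ) * Complex.I) := by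
  rw [E]; congr 1; push_cast; ring

lemma norm_E (m : ℤ) : ‖E N m‖ = 1 := by
  rw [E_as_real]
  exact Complex.norm_exp_ofReal_mul_I _

lemma E_neg (m : ℤ) : E N (-m) = (starRingEnd ℂ) (E N m) := by
  rw [E_as_real, E_as_real, ← Complex.exp_conj]
  congr 1
  simp [map_ofNat]
  push_cast
  ring

noncomputable def eps (x : ZMod N) : ℂ := E N (x.val : ℤ)

lemma eps_intCast (m : ℤ) : eps N (m : ZMod N) = E N m := by
  apply E_congr
  push_cast [ZMod.natCast_val, ZMod.cast_id]
  rfl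

lemma eps_add (x y : ZMod N) : eps N (x + y) = eps N x * eps N y := by
  rw [eps, eps, eps, ← E_add]
  apply E_congr
  push_cast [ZMod.natCast_val, ZMod.cast_id]
  rfl

lemma eps_zero : eps N 0 = 1 := by
  rw [eps]; simp [E_zero]

lemma conj_eps (x : ZMod N) : (starRingEnd ℂ) (eps N x) = eps N (-x) := by
  rw [eps, ← E_neg]
  apply E_congr
  push_cast [ZMod.natCast_val, ZMod.cast_id]
  rfl

lemma norm_eps (x : ZMod N) : ‖eps N x‖ = 1 := norm_E N _

lemma eps_ne_one {x : ZMod N} (hx : x ≠ 0) : eps N x ≠ 1 := by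
  intro h
  apply hx
  rw [eps, E_as_real] at h
  obtain ⟨n, hn⟩ := Complex.exp_eq_one_iff.mp h
  have him := congrArg Complex.im hn
  simp [Complex.ofReal_mul] at him
  have hNpos : (0 : ℝ) < N := Nat.cast_pos.mpr (Nat.pos_of_ne_zero (NeZero.ne N))
  have hpi : (0 : ℝ) < Real.pi := Real.pi_pos
  have hv : (x.val : ℝ) = n * N := by
    field_simp at him
    rw [← ZMod.natCast_val] at him
    have h2 : (2 * Real.pi) * (x.val : ℝ) = (2 * Real.pi) * ((n : ℝ) * N) := by linear_combination (2 * Real.pi) * him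
    exact mul_left_cancel₀ (by positivity) h2
  have hvz : (x.val : ℤ) = n * N := by exact_mod_cast hv
  have hdvd : (N : ℤ) ∣ (x.val : ℤ) := ⟨n, by linarith [hvz]⟩
  have hdvd' : N ∣ x.val := Int.ofNat_dvd.mp hdvd
  have hval : x.val = 0 := Nat.eq_zero_of_dvd_of_lt hdvd' (ZMod.val_lt x)
  exact (ZMod.val_eq_zero x).mp hval

lemma sum_eps_mul (t : ZMod N) (ht : t ≠ 0) : ∑ y : ZMod N, eps N (t * y) = 0 := by
  have key : eps N t * ∑ y : ZMod N, eps N (t * y) = ∑ y : ZMod N, eps N (t * y) := by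
    rw [Finset.mul_sum]
    refine Fintype.sum_equiv (Equiv.addRight 1) _ _ fun y => ?_
    rw [← eps_add]
    congr 1
    simp [Equiv.coe_addRight]
    ring
  have h2 : (eps N t - 1) * ∑ y : ZMod N, eps N (t * y) = 0 := by
    rw [sub_mul, one_mul, key, sub_self]
  rcases mul_eq_zero.mp h2 with h | h
  · exact absurd (sub_eq_zero.mp h) (eps_ne_one N ht)
  · exact h

end Stmt16Aux

/-- For odd `N` and `a` coprime to `N`, the Gaussian
`g k = exp(2πi(a k² + b k)/N)` is biunimodular. -/
theorem stmt_16 (N : ℕ) [NeZero N] (hN : 0 < N) (hodd : Odd N) (a b : ℤ)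
    (ha : IsCoprime a (N : ℤ))
    (g : ZMod N → ℂ)
    (hg : ∀ k : ZMod N, g k =
      Complex.exp (2 * Real.pi * Complex.I * ((a : ℂ) * (k.val : ℂ) ^ 2 + (b : ℂ) * k.val) / N)) :
    (∀ k : ZMod N, ‖g k‖ = 1) ∧ (∀ c : ZMod N, ‖dft1 N g c‖ = 1) := by
  open Stmt16Aux in
  have hg' : ∀ k : ZMod N, g k = E N (a * (k.val : ℤ) ^ 2 + b * (k.val : ℤ)) := by
    intro k
    rw [hg k, E]
    congr 1
    push_cast
    ring
  constructor
  · intro k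
    rw [hg' k]
    exact Stmt16Aux.norm_E N _
  · intro c
    set A : ZMod N := (a : ZMod N) with hA
    set B : ZMod N := (b : ZMod N) + c with hB
    set F : ZMod N → ℂ := fun x => Stmt16Aux.eps N (A * x ^ 2 + B * x) with hF
    have hsummand : ∀ k : ZMod N,
        Complex.exp (2 * Real.pi * Complex.I * ((k.val : ℂ) * (c.val : ℂ)) / N) * g k = F k := by
      intro k
      rw [hg' k]
      have h1 : Complex.exp (2 * Real.pi * Complex.I * ((k.val : ℂ) * (c.val : ℂ)) / N)
          = Stmt16Aux.E N ((k.val : ℤ) * (c.val : ℤ)) := by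
        rw [Stmt16Aux.E]; congr 1; push_cast; ring
      rw [h1, ← Stmt16Aux.E_add, ← Stmt16Aux.eps_intCast]
      show Stmt16Aux.eps N _ = Stmt16Aux.eps N _
      congr 1
      push_cast [ZMod.natCast_val, ZMod.cast_id]
      ring
    set S : ℂ := ∑ k : ZMod N, F k with hS
    -- units
    have hAu : IsUnit A := by
      obtain ⟨u, v, huv⟩ := ha
      apply IsUnit.of_mul_eq_one (a := A) (u : ZMod N)
      have h0 : ((u * a + v * N : ℤ) : ZMod N) = ((1 : ℤ) : ZMod N) := by rw [huv]
      push_cast at h0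
      rw [ZMod.natCast_self, mul_zero, add_zero] at h0
      rw [mul_comm]; exact h0
    have h2u : IsUnit (2 : ZMod N) := by
      rw [show (2 : ZMod N) = ((2 : ℕ) : ZMod N) by norm_cast, ZMod.isUnit_iff_coprime]
      exact Nat.coprime_two_left.mpr hodd
    have hinner : ∀ d : ZMod N,
        (∑ y : ZMod N, F (y + d) * (starRingEnd ℂ) (F y)) = if d = 0 then (N : ℂ) else 0 := by
      intro d
      by_cases hd : d = 0
      · subst hd
        rw [if_pos rfl]
        have : ∀ y : ZMod N, F (y + 0) * (starRingEnd ℂ) (F y) = 1 := by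
          intro y
          rw [add_zero, Complex.mul_conj]
          have hn : ‖F y‖ = 1 := Stmt16Aux.norm_eps N _
          rw [Complex.normSq_eq_norm_sq, hn]
          norm_num
        rw [Finset.sum_congr rfl (fun y _ => this y)]
        simp
      · rw [if_neg hd]
        have hstep : ∀ y : ZMod N, F (y + d) * (starRingEnd ℂ) (F y)
            = Stmt16Aux.eps N (A * d ^ 2 + B * d) * Stmt16Aux.eps N ((2 * A * d) * y) := by
          intro y
          rw [hF]
          simp only []
          rw [Stmt16Aux.conj_eps, ← Stmt16Aux.eps_add, ← Stmt16Aux.eps_add]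
          congr 1
          ring
        rw [Finset.sum_congr rfl (fun y _ => hstep y), ← Finset.mul_sum]
        have ht : (2 * A * d) ≠ 0 := by
          intro h
          exact hd (((h2u.mul hAu).mul_right_eq_zero).mp h)
        rw [Stmt16Aux.sum_eps_mul N _ ht, mul_zero]
    have key : S * (starRingEnd ℂ) S = (N : ℂ) := by
      rw [hS, map_sum, Finset.sum_mul_sum]
      rw [Finset.sum_comm]
      have hre : ∀ y : ZMod N, (∑ x : ZMod N, F x * (starRingEnd ℂ) (F y))
          = ∑ d : ZMod N, F (y + d) * (starRingEnd ℂ) (F y) := by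
        intro y
        exact (Fintype.sum_equiv (Equiv.addLeft y) _ _ (fun d => rfl)).symm
      rw [Finset.sum_congr rfl (fun y _ => hre y), Finset.sum_comm,
        Finset.sum_congr rfl (fun d _ => hinner d)]
      simp
    have hnormS : ‖S‖ = Real.sqrt N := by
      have h1 : (Complex.normSq S : ℂ) = (N : ℂ) := by rw [← Complex.mul_conj]; exact key
      have h2 : Complex.normSq S = (N : ℝ) := by exact_mod_cast h1
      rw [Complex.norm_def, h2]
    have hsqrt : (0 : ℝ) < Real.sqrt N := Real.sqrt_pos.mpr (by exact_mod_cast hN)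
    rw [dft1]
    rw [Finset.sum_congr rfl (fun k _ => hsummand k), ← hS]
    rw [norm_mul, hnormS]
    rw [norm_div, norm_one]
    rw [Complex.norm_real, Real.norm_eq_abs, abs_of_pos hsqrt]
    field_simp
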